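/- (Entropy equality for semi-discrete entropy conservative schemes.) Let m ≥ 1, let η : ℝ^m → ℝ be differentiable with gradient W := ∇η, let ψ : ℝ^m → ℝ, and let F̃ : ℝ^m × ℝ^m → ℝ^m satisfy the entropy conservation condition ⟨W(b) − W(a), F̃(a,b)⟩ = ψ(b) − ψ(a) for all a, b ∈ ℝ^m. Let Δx > 0 and let U : ℝ → (ℤ → ℝ^m) be such that each t ↦ U_i(t) is differentiable and satisfies the semi-discrete scheme U_i′(t) = −(F̃(U_i(t), U_{i+1}(t)) − F̃(U_{i−1}(t), U_i(t)))/Δx. Define the numerical entropy flux q̃(a,b) = ⟨(W(a)+W(b))/2, F̃(a,b)⟩ − (ψ(a)+ψ(b))/2. Then for every i ∈ ℤ and every t, (d/dt) η(U_i(t)) + (q̃(U_i(t), U_{i+1}(t)) − q̃(U_{i−1}(t), U_i(t)))/Δx = 0. -/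

import Mathlib

open Matrix

/-- The continuous linear map `u ↦ w ⬝ᵥ u` on `ℝ^m`, used to express that a function
has gradient `w`. -/
noncomputable def dotCLM {m : ℕ} (w : Fin m → ℝ) : (Fin m → ℝ) →L[ℝ] ℝ :=
  LinearMap.toContinuousLinearMap
    { toFun := fun u => w ⬝ᵥ u
      map_add' := fun x y => by simp [dotProduct, mul_add, Finset.sum_add_distrib]
      map_smul' := fun c x => by
        simp [dotProduct, Finset.mul_sum, mul_comm, mul_left_comm] }

/-- Entropy equality for second-order semi-discrete entropy conservative schemes:
if `η` has gradient `W`, `F̃` is an entropy conservative two-point flux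
(`⟨W(b)−W(a), F̃(a,b)⟩ = ψ(b)−ψ(a)`), and `U` solves the semi-discrete scheme
`U_i′ = −(F̃(U_i,U_{i+1}) − F̃(U_{i−1},U_i))/Δx`, then with the numerical entropy flux
`q̃(a,b) = ⟨(W(a)+W(b))/2, F̃(a,b)⟩ − (ψ(a)+ψ(b))/2` one has
`d/dt η(U_i) + (q̃(U_i,U_{i+1}) − q̃(U_{i−1},U_i))/Δx = 0`. -/
theorem stmt17 (m : ℕ) (hm : 1 ≤ m)
    (η : (Fin m → ℝ) → ℝ) (W : (Fin m → ℝ) → Fin m → ℝ) (ψ : (Fin m → ℝ) → ℝ)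
    (Ftil : (Fin m → ℝ) → (Fin m → ℝ) → Fin m → ℝ)
    (hgrad : ∀ x, HasFDerivAt η (dotCLM (W x)) x)
    (hEC : ∀ a b, (W b - W a) ⬝ᵥ Ftil a b = ψ b - ψ a)
    (Δx : ℝ) (hΔx : 0 < Δx)
    (U : ℝ → ℤ → Fin m → ℝ)
    (hscheme : ∀ (i : ℤ) (t : ℝ),
      HasDerivAt (fun s => U s i)
        (-(Δx⁻¹ • (Ftil (U t i) (U t (i + 1)) - Ftil (U t (i - 1)) (U t i)))) t) :
    let qtil : (Fin m → ℝ) → (Fin m → ℝ) → ℝ := fun a b =>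
      ((2 : ℝ)⁻¹ • (W a + W b)) ⬝ᵥ Ftil a b - (ψ a + ψ b) / 2
    ∀ (i : ℤ) (t : ℝ),
      HasDerivAt (fun s => η (U s i))
        (-((qtil (U t i) (U t (i + 1)) - qtil (U t (i - 1)) (U t i)) / Δx)) t := by
  intro qtil i t
  have h := (hgrad (U t i)).comp_hasDerivAt t (hscheme i t)
  convert h using 1
  show -((qtil (U t i) (U t (i + 1)) - qtil (U t (i - 1)) (U t i)) / Δx)
      = dotCLM (W (U t i)) (-(Δx⁻¹ • (Ftil (U t i) (U t (i + 1)) - Ftil (U t (i - 1)) (U t i))))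
  have hd : dotCLM (W (U t i)) (-(Δx⁻¹ • (Ftil (U t i) (U t (i + 1)) - Ftil (U t (i - 1)) (U t i))))
      = W (U t i) ⬝ᵥ (-(Δx⁻¹ • (Ftil (U t i) (U t (i + 1)) - Ftil (U t (i - 1)) (U t i)))) := rfl
  rw [hd]
  have key : W (U t i) ⬝ᵥ Ftil (U t i) (U t (i + 1)) - W (U t i) ⬝ᵥ Ftil (U t (i - 1)) (U t i)
      = qtil (U t i) (U t (i + 1)) - qtil (U t (i - 1)) (U t i) := by
    have h1 := hEC (U t i) (U t (i + 1))
    have h2 := hEC (U t (i - 1)) (U t i)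
    simp only [qtil, sub_dotProduct, smul_dotProduct, add_dotProduct,
      smul_eq_mul] at h1 h2 ⊢
    ring_nf
    ring_nf at h1 h2
    linarith
  rw [dotProduct_neg, dotProduct_smul, dotProduct_sub, key]
  field_simp
  · simp only [smul_eq_mul]
    field_simp
  · rfl
  · rfl
  · rfl
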